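/- Let H be a complex Hilbert space, c a unit vector in H, and r a real number with 0 ≤ r < 1. Let L be a closed subspace of H. Then B ∩ L ⊆ H(c, r) if and only if infDist(c, L) > r, where B = { x ∈ H | ‖x‖ ≤ 1 } is the closed unit ball, H(c, r) = { x ∈ H | re⟪c, x⟫ < √(1 − r²) }, and infDist(c, L) is the infimum of ‖c − y‖ over y ∈ L. -/

import Mathlib

open scoped InnerProductSpace

/-- For a unit vector `c`, `0 ≤ r < 1` and a closed subspace `L` of a complex
Hilbert space: the intersection of the unit ball with `L` is contained in the open
half space `H(c,r) = {x | re⟪c, x⟫ < √(1 - r²)}` iff `infDist c L > r`. -/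
theorem unitBall_inter_subspace_subset_halfspace_iff_infDist_gt
    {H : Type*} [NormedAddCommGroup H] [InnerProductSpace ℂ H] [CompleteSpace H]
    (c : H) (hc : ‖c‖ = 1) (r : ℝ) (hr0 : 0 ≤ r) (hr1 : r < 1)
    (L : Submodule ℂ H) (hL : IsClosed (L : Set H)) :
    {x : H | ‖x‖ ≤ 1} ∩ (L : Set H)
        ⊆ {x : H | (⟪c, x⟫_ℂ).re < Real.sqrt (1 - r ^ 2)} ↔
      r < Metric.infDist c (L : Set H) := by
  haveI : CompleteSpace L := hL.completeSpace_coe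
  set u : H := (L.orthogonalProjectionOnto c : H) with hu_def
  have huL : u ∈ L := (L.orthogonalProjectionOnto c).2
  set v : H := c - u with hv_def
  have hvL : v ∈ Lᗮ := Submodule.sub_starProjection_mem_orthogonal (K := L) c
  -- Pythagoras: 1 = ‖u‖² + ‖v‖²
  have hinner : ⟪u, v⟫_ℂ = 0 := (Submodule.mem_orthogonal L v).1 hvL u huL
  have hpyth : ‖u‖ ^ 2 + ‖v‖ ^ 2 = 1 := by
    have := norm_add_sq (𝕜 := ℂ) u v
    have hcuv : u + v = c := by simp [hv_def]
    rw [hcuv, hinner] at this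
    simp [hc] at this
    linarith
  -- infDist = ‖v‖
  have hdist : Metric.infDist c (L : Set H) = ‖v‖ := by
    apply le_antisymm
    · have := Metric.infDist_le_dist_of_mem (x := c) huL
      rwa [dist_eq_norm] at this
    · by_contra hlt
      push_neg at hlt
      obtain ⟨y, hy, hdy⟩ := (Metric.infDist_lt_iff ⟨0, L.zero_mem⟩).1 hlt
      rw [dist_eq_norm] at hdy
      suffices hle : ‖v‖ ≤ ‖c - y‖ by linarith
      have hdecomp : c - y = v + (u - y) := by
        show c - y = (c - u) + (u - y)
        abel
      have h0 : ⟪u - y, v⟫_ℂ = 0 :=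
        (Submodule.mem_orthogonal L v).1 hvL _ (L.sub_mem huL hy)
      have h0' : ⟪v, u - y⟫_ℂ = 0 := by
        rw [← inner_conj_symm, h0]; simp
      have := norm_add_sq (𝕜 := ℂ) v (u - y)
      rw [h0'] at this
      have hsq : ‖c - y‖ ^ 2 = ‖v‖ ^ 2 + ‖u - y‖ ^ 2 := by
        rw [hdecomp, this]; simp
      nlinarith [norm_nonneg (c - y), norm_nonneg v, norm_nonneg (u - y)]
  have hsqrt_pos : 0 < Real.sqrt (1 - r ^ 2) := by
    apply Real.sqrt_pos.2; nlinarith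
  have key : (∀ x ∈ L, ‖x‖ ≤ 1 → (⟪c, x⟫_ℂ).re < Real.sqrt (1 - r ^ 2)) ↔
      ‖u‖ < Real.sqrt (1 - r ^ 2) := by
    constructor
    · intro h
      rcases eq_or_ne u 0 with h0 | h0
      · rw [h0]; simpa using hsqrt_pos
      · have hn : (0:ℝ) < ‖u‖ := norm_pos_iff.2 h0
        have hx : ((‖u‖:ℂ)⁻¹ • u) ∈ L := L.smul_mem _ huL
        have hxnorm : ‖(‖u‖:ℂ)⁻¹ • u‖ ≤ 1 := by
          rw [norm_smul]
          simp [hn.le, hn.ne']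
        have := h _ hx hxnorm
        have hcu : ⟪c, u⟫_ℂ = (‖u‖ : ℂ) ^ 2 := by
          have : ⟪v + u, u⟫_ℂ = ⟪u, u⟫_ℂ := by
            rw [inner_add_left]
            have : ⟪v, u⟫_ℂ = 0 := by rw [← inner_conj_symm, hinner]; simp
            rw [this, zero_add]
          have hvuc : v + u = c := by rw [hv_def]; abel
          rw [← hvuc, this, inner_self_eq_norm_sq_to_K]
          norm_num
        rw [inner_smul_right, hcu] at this
        have hre : ((((‖u‖:ℂ))⁻¹ * (‖u‖:ℂ) ^ 2)).re = ‖u‖ := by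
          rw [← Complex.ofReal_pow, ← Complex.ofReal_inv, ← Complex.ofReal_mul]
          rw [Complex.ofReal_re]
          field_simp
        rwa [hre] at this
    · intro h x hx hxnorm
      have hcx : ⟪c, x⟫_ℂ = ⟪u, x⟫_ℂ := by
        have hvx : ⟪v, x⟫_ℂ = 0 := by
          rw [← inner_conj_symm, (Submodule.mem_orthogonal L v).1 hvL x hx]; simp
        have hvuc : v + u = c := by rw [hv_def]; abel
        rw [← hvuc, inner_add_left, hvx, zero_add]
      calc (⟪c, x⟫_ℂ).re ≤ ‖u‖ * ‖x‖ := by rw [hcx]; exact re_inner_le_norm (𝕜 := ℂ) u x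
        _ ≤ ‖u‖ * 1 := by
            exact mul_le_mul_of_nonneg_left hxnorm (norm_nonneg _)
        _ < Real.sqrt (1 - r ^ 2) := by rwa [mul_one]
  have hset : ({x : H | ‖x‖ ≤ 1} ∩ (L : Set H)
      ⊆ {x : H | (⟪c, x⟫_ℂ).re < Real.sqrt (1 - r ^ 2)}) ↔
      (∀ x ∈ L, ‖x‖ ≤ 1 → (⟪c, x⟫_ℂ).re < Real.sqrt (1 - r ^ 2)) := by
    constructor
    · intro h x hx hxn; exact h ⟨hxn, hx⟩
    · intro h x ⟨hxn, hx⟩; exact h x hx hxn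
  rw [hset, key, hdist]
  have h1r : 0 < 1 - r ^ 2 := by nlinarith
  constructor
  · intro h
    have h2 : ‖u‖ ^ 2 < 1 - r ^ 2 := by
      have := Real.sq_sqrt h1r.le
      nlinarith [norm_nonneg u, Real.sqrt_nonneg (1 - r ^ 2)]
    have : r ^ 2 < ‖v‖ ^ 2 := by linarith
    nlinarith [norm_nonneg v]
  · intro h
    have h2 : r ^ 2 < ‖v‖ ^ 2 := by nlinarith [norm_nonneg v]
    have h3 : ‖u‖ ^ 2 < 1 - r ^ 2 := by linarith
    have := Real.sq_sqrt h1r.le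
    nlinarith [norm_nonneg u, Real.sqrt_nonneg (1 - r ^ 2), hsqrt_pos]
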